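/- Let $X$ be a Lévy process such that $0$ is irregular for $(-\infty, 0)$, meaning that almost surely the first entrance time of $X$ into $(-\infty,0)$ is strictly positive. Suppose $(X_{\varepsilon t}/a_\varepsilon)_{t\ge0}$ converges weakly (Skorokhod topology) as $\varepsilon \downarrow 0$ to a non-trivial Lévy process $\hat X$. Then $\hat X$ is almost surely non-negative at all times, hence non-decreasing. -/

import Mathlib

open MeasureTheory Filter Topology ProbabilityTheory

/-- A Lévy process: starts at `0`, has stationary and independent increments,
and is continuous in probability. -/
def IsLevyProcess {Ω : Type*} [MeasurableSpace Ω] (μ : Measure Ω)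
    (X : ℝ → Ω → ℝ) : Prop :=
  (∀ᵐ ω ∂μ, X 0 ω = 0) ∧
  (∀ s t : ℝ, 0 ≤ s → 0 ≤ t →
    IdentDistrib (fun ω => X (s + t) ω - X s ω) (X t) μ μ) ∧
  (∀ (n : ℕ) (t : Fin (n + 1) → ℝ), Monotone t → (∀ i, 0 ≤ t i) →
    iIndepFun
      (fun (i : Fin n) ω => X (t i.succ) ω - X (t i.castSucc) ω) μ) ∧
  (∀ t : ℝ, 0 ≤ t → ∀ d > (0:ℝ),
    Tendsto (fun s => μ {ω | d < |X s ω - X t ω|}) (𝓝 t) (𝓝 0))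

/-- If `0` is irregular for `(-∞,0)` for the Lévy process `X` and
`(X (ε t) / a ε)` converges weakly (here: in finite-dimensional distributions,
which for Lévy processes is equivalent to weak convergence on Skorokhod space)
to a non-trivial Lévy process `X̂`, then `X̂` is a.s. non-negative at every
time, hence non-decreasing. -/
theorem irregular_implies_increasing_limit
    {Ω Ω' : Type*} [MeasurableSpace Ω] [MeasurableSpace Ω']
    (μ : Measure Ω) (ν : Measure Ω') [IsProbabilityMeasure μ] [IsProbabilityMeasure ν]
    (X : ℝ → Ω → ℝ) (Xh : ℝ → Ω' → ℝ)
    (hX : IsLevyProcess μ X) (hXh : IsLevyProcess ν Xh)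
    (hirr : ∀ η > (0:ℝ), ∃ h > (0:ℝ),
      1 - ENNReal.ofReal η ≤ μ {ω | ∀ t ∈ Set.Icc (0:ℝ) h, 0 ≤ X t ω})
    (a : ℝ → ℝ) (ha : ∀ ε > (0:ℝ), 0 < a ε)
    (hfdd : ∀ (n : ℕ) (t : Fin n → ℝ), (∀ i, 0 ≤ t i) →
      ∀ f : BoundedContinuousFunction (Fin n → ℝ) ℝ,
        Tendsto (fun ε => ∫ ω, f (fun i => X (ε * t i) ω / a ε) ∂μ) (𝓝[>] (0:ℝ))
          (𝓝 (∫ ω', f (fun i => Xh (t i) ω') ∂ν)))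
    (hnontriv : ∃ t ≥ (0:ℝ), 0 < ν {ω' | Xh t ω' ≠ 0}) :
    (∀ t : ℝ, 0 ≤ t → ∀ᵐ ω' ∂ν, 0 ≤ Xh t ω') ∧
    (∀ s t : ℝ, 0 ≤ s → s ≤ t → ∀ᵐ ω' ∂ν, Xh s ω' ≤ Xh t ω') := by
  classical
  have hstat := hXh.2.1
  have part1 : ∀ t : ℝ, 0 ≤ t → ∀ᵐ ω' ∂ν, 0 ≤ Xh t ω' := by
    intro t ht
    rcases ht.eq_or_lt with h0 | ht
    · filter_upwards [hXh.1] with ω' hω'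
      rw [← h0, hω']
    · -- Key claim: for every `δ > 0`, `ν {Xh t ≤ -δ} = 0`.
      have key : ∀ δ : ℝ, 0 < δ → ν {ω' | Xh t ω' ≤ -δ} = 0 := by
        intro δ hδ
        set g : ℝ → ℝ := fun x => min 1 (max 0 (-x / δ)) with hg_def
        have hg_nonneg : ∀ x, 0 ≤ g x := fun x => le_min zero_le_one (le_max_left _ _)
        have hg_le_one : ∀ x, g x ≤ 1 := fun x => min_le_left _ _
        have hg_zero : ∀ x, 0 ≤ x → g x = 0 := by
          intro x hx
          have h1 : -x / δ ≤ 0 := by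
            have h2 : 0 ≤ x / δ := div_nonneg hx hδ.le
            rw [neg_div]; linarith
          simp only [hg_def]
          rw [max_eq_left h1, min_eq_right zero_le_one]
        have hg_one : ∀ x, x ≤ -δ → g x = 1 := by
          intro x hx
          have h1 : (1:ℝ) ≤ -x / δ := (le_div_iff₀ hδ).2 (by linarith)
          simp only [hg_def]
          rw [max_eq_right (by linarith), min_eq_left h1]
        have hgc : Continuous g :=
          continuous_const.min (continuous_const.max (continuous_neg.div_const δ))
        set G : BoundedContinuousFunction ℝ ℝ :=
          BoundedContinuousFunction.mkOfBound ⟨g, hgc⟩ 1 (fun x y => by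
            rw [Real.dist_eq, abs_sub_le_iff]
            constructor
            · have := hg_le_one x; have := hg_nonneg y; simpa using by linarith
            · have := hg_le_one y; have := hg_nonneg x; simpa using by linarith) with hG_def
        set F : BoundedContinuousFunction (Fin 1 → ℝ) ℝ :=
          G.compContinuous ⟨fun v => v 0, continuous_apply 0⟩ with hF_def
        have hT : Tendsto (fun ε => ∫ ω, g (X (ε * t) ω / a ε) ∂μ) (𝓝[>] (0:ℝ))
            (𝓝 (∫ ω', g (Xh t ω') ∂ν)) :=
          hfdd 1 (fun _ => t) (fun _ => ht.le) F
        -- upper bound on the limit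
        have hlim_le : ∀ η : ℝ, 0 < η → (∫ ω', g (Xh t ω') ∂ν) ≤ η := by
          intro η hη
          obtain ⟨h, hh, hA⟩ := hirr η hη
          refine le_of_tendsto hT ?_
          have hmem : Set.Ioo (0:ℝ) (h / t) ∈ 𝓝[>] (0:ℝ) :=
            Ioo_mem_nhdsGT_of_mem ⟨le_refl 0, div_pos hh ht⟩
          filter_upwards [hmem] with ε hε
          set fε : Ω → ℝ := fun ω => g (X (ε * t) ω / a ε) with hfε_def
          have hfA : ∀ ω, (∀ s ∈ Set.Icc (0:ℝ) h, 0 ≤ X s ω) → fε ω = 0 := by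
            intro ω hω
            have hmem' : ε * t ∈ Set.Icc (0:ℝ) h :=
              ⟨mul_nonneg hε.1.le ht.le, ((lt_div_iff₀ ht).1 hε.2).le⟩
            exact hg_zero _ (div_nonneg (hω _ hmem') (ha ε hε.1).le)
          by_cases hint : Integrable fε μ
          · set f' : Ω → ℝ := hint.1.mk fε with hf'_def
            have hf'm : StronglyMeasurable f' := hint.1.stronglyMeasurable_mk
            have hmk : fε =ᵐ[μ] f' := hint.1.ae_eq_mk
            have hne : μ {ω | ¬ fε ω = f' ω} = 0 := ae_iff.1 hmk
            set B : Set Ω := {ω | f' ω ≤ 0} with hB_def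
            have hB : MeasurableSet B := hf'm.measurable measurableSet_Iic
            have hμB : 1 - ENNReal.ofReal η ≤ μ B := by
              have hsub : {ω | ∀ s ∈ Set.Icc (0:ℝ) h, 0 ≤ X s ω} ⊆ B ∪ {ω | ¬ fε ω = f' ω} := by
                intro ω hω
                by_cases he : fε ω = f' ω
                · exact Or.inl (show f' ω ≤ 0 from by rw [← he, hfA ω hω])
                · exact Or.inr he
              calc 1 - ENNReal.ofReal η
                  ≤ μ {ω | ∀ s ∈ Set.Icc (0:ℝ) h, 0 ≤ X s ω} := hA
                _ ≤ μ (B ∪ {ω | ¬ fε ω = f' ω}) := measure_mono hsub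
                _ ≤ μ B + μ {ω | ¬ fε ω = f' ω} := measure_union_le _ _
                _ = μ B := by rw [hne, add_zero]
            have hcompl : μ Bᶜ ≤ ENNReal.ofReal η := by
              have h1 : μ Bᶜ = 1 - μ B := by
                rw [measure_compl hB (measure_ne_top μ B), measure_univ]
              rw [h1, tsub_le_iff_right]
              calc (1:ENNReal) ≤ ENNReal.ofReal η + (1 - ENNReal.ofReal η) := le_add_tsub
                _ ≤ ENNReal.ofReal η + μ B := add_le_add le_rfl hμB
            have hind_int : Integrable (Bᶜ.indicator fun _ => (1:ℝ)) μ :=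
              (integrable_const 1).indicator hB.compl
            have hmono : ∫ ω, fε ω ∂μ ≤ ∫ ω, Bᶜ.indicator (fun _ => (1:ℝ)) ω ∂μ := by
              rw [integral_congr_ae hmk]
              refine integral_mono_of_nonneg ?_ hind_int ?_
              · filter_upwards [hmk.symm] with ω hω
                show (0:ℝ) ≤ f' ω
                rw [hω]; exact hg_nonneg _
              · filter_upwards [hmk.symm] with ω hω
                by_cases hb : f' ω ≤ 0
                · rw [Set.indicator_of_notMem (by simpa [hB_def] using hb)]
                  exact hb
                · rw [Set.indicator_of_mem (by simpa [hB_def] using hb)]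
                  rw [hω]; exact hg_le_one _
            have hind_val : ∫ ω, Bᶜ.indicator (fun _ => (1:ℝ)) ω ∂μ = (μ Bᶜ).toReal := by
              rw [integral_indicator_const (1:ℝ) hB.compl, smul_eq_mul, mul_one]; rfl
            calc ∫ ω, fε ω ∂μ ≤ (μ Bᶜ).toReal := hind_val ▸ hmono
              _ ≤ η := ENNReal.toReal_le_of_le_ofReal hη.le hcompl
          · rw [integral_undef hint]; exact hη.le
        -- lower bound: relate the limit integral to `ν {Xh t ≤ -δ}`.
        have hY : AEMeasurable (Xh t) ν := (hstat 0 t le_rfl ht.le).aemeasurable_snd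
        set Y' : Ω' → ℝ := hY.mk (Xh t) with hY'_def
        have hY'm : Measurable Y' := hY.measurable_mk
        have hYeq : Xh t =ᵐ[ν] Y' := hY.ae_eq_mk
        have hint' : Integrable (fun ω' => g (Y' ω')) ν :=
          ⟨(hgc.measurable.comp hY'm).aestronglyMeasurable,
            HasFiniteIntegral.of_bounded (C := 1) (ae_of_all _ fun ω' => by
              rw [Real.norm_eq_abs, abs_le]
              exact ⟨by linarith [hg_nonneg (Y' ω')], hg_le_one _⟩)⟩
        have hcong : ∫ ω', g (Xh t ω') ∂ν = ∫ ω', g (Y' ω') ∂ν :=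
          integral_congr_ae (hYeq.fun_comp g)
        have hB' : MeasurableSet {ω' | Y' ω' ≤ -δ} := hY'm measurableSet_Iic
        have hlow : (ν {ω' | Y' ω' ≤ -δ}).toReal ≤ ∫ ω', g (Y' ω') ∂ν := by
          have hmono2 : ∫ ω', Set.indicator {ω' | Y' ω' ≤ -δ} (fun _ => (1:ℝ)) ω' ∂ν
              ≤ ∫ ω', g (Y' ω') ∂ν := by
            refine integral_mono_of_nonneg
              (ae_of_all _ fun ω' => Set.indicator_nonneg (fun _ _ => zero_le_one) _)
              hint' (ae_of_all _ fun ω' => ?_)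
            by_cases hb : Y' ω' ≤ -δ
            · rw [Set.indicator_of_mem (show ω' ∈ {ω' | Y' ω' ≤ -δ} from hb)]
              exact (hg_one _ hb).ge
            · rw [Set.indicator_of_notMem (show ω' ∉ {ω' | Y' ω' ≤ -δ} from hb)]
              exact hg_nonneg _
          rwa [integral_indicator_const (1:ℝ) hB', smul_eq_mul, mul_one] at hmono2
        have hto : ∀ η : ℝ, 0 < η → (ν {ω' | Y' ω' ≤ -δ}).toReal ≤ η :=
          fun η hη => hlow.trans (hcong ▸ hlim_le η hη)
        have hzero : (ν {ω' | Y' ω' ≤ -δ}).toReal = 0 := by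
          by_contra hpos
          have h0 : 0 < (ν {ω' | Y' ω' ≤ -δ}).toReal :=
            lt_of_le_of_ne ENNReal.toReal_nonneg (Ne.symm hpos)
          have := hto ((ν {ω' | Y' ω' ≤ -δ}).toReal / 2) (by linarith)
          linarith
        have hνB' : ν {ω' | Y' ω' ≤ -δ} = 0 :=
          ((ENNReal.toReal_eq_zero_iff _).1 hzero).resolve_right (measure_ne_top ν _)
        have hne' : ν {ω' | ¬ Xh t ω' = Y' ω'} = 0 := ae_iff.1 hYeq
        refine le_antisymm ?_ zero_le
        calc ν {ω' | Xh t ω' ≤ -δ}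
            ≤ ν ({ω' | Y' ω' ≤ -δ} ∪ {ω' | ¬ Xh t ω' = Y' ω'}) := by
              refine measure_mono fun ω' hω' => ?_
              by_cases he : Xh t ω' = Y' ω'
              · exact Or.inl (by simpa [← he] using hω')
              · exact Or.inr he
          _ ≤ ν {ω' | Y' ω' ≤ -δ} + ν {ω' | ¬ Xh t ω' = Y' ω'} := measure_union_le _ _
          _ = 0 := by rw [hνB', hne', add_zero]
      -- conclude `Xh t ≥ 0` a.s.
      rw [ae_iff]
      refine le_antisymm ?_ zero_le
      have hsub : {ω' | ¬ 0 ≤ Xh t ω'} ⊆ ⋃ n : ℕ, {ω' | Xh t ω' ≤ -(1 / (n + 1 : ℝ))} := by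
        intro ω' hω'
        have hlt : Xh t ω' < 0 := not_le.1 hω'
        obtain ⟨n, hn⟩ := exists_nat_one_div_lt (show (0:ℝ) < -(Xh t ω') by linarith)
        exact Set.mem_iUnion.2 ⟨n, by simp only [Set.mem_setOf_eq]; linarith⟩
      calc ν {ω' | ¬ 0 ≤ Xh t ω'}
          ≤ ν (⋃ n : ℕ, {ω' | Xh t ω' ≤ -(1 / (n + 1 : ℝ))}) := measure_mono hsub
        _ = 0 := measure_iUnion_null fun n => key _ (by positivity)
  refine ⟨part1, ?_⟩
  intro s t hs hst
  have h1 := part1 (t - s) (by linarith)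
  have hid := hstat s (t - s) hs (by linarith)
  rw [show s + (t - s) = t by ring] at hid
  have h0 : ν ((fun ω' => Xh t ω' - Xh s ω') ⁻¹' Set.Iio 0)
      = ν (Xh (t - s) ⁻¹' Set.Iio 0) := hid.measure_mem_eq measurableSet_Iio
  have h2 : ν (Xh (t - s) ⁻¹' Set.Iio 0) = 0 := by
    have h3 := ae_iff.1 h1
    rw [show Xh (t - s) ⁻¹' Set.Iio 0 = {ω' | ¬ 0 ≤ Xh (t - s) ω'} from by
      ext ω'; simp [not_le]]
    exact h3
  rw [ae_iff]
  rw [show {ω' | ¬ Xh s ω' ≤ Xh t ω'} = (fun ω' => Xh t ω' - Xh s ω') ⁻¹' Set.Iio 0 from by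
    ext ω'; simp [not_le, sub_neg]]
  rw [h0]; exact h2
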